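/- arXiv:1312.4861 — 2 statements merged into one kernel-verified Lean document; each statement's English description precedes it below -/
import Mathlib

section
/- Let W ⊂ ℝ^d be a compact convex set. For every unit vector u ∈ S^{d-1}, the function r ↦ g_W(ru) is Lipschitz on [0, ∞) with Lipschitz constant V_{d-1}(W | u^⊥). -/
open MeasureTheory Metric
open scoped ENNReal NNReal

lemma aux_mem_image_add {G : Type*} [AddCommGroup G] {S : Set G} {w x : G} :
    x ∈ (· + w) '' S ↔ x - w ∈ S := by
  constructor
  · rintro ⟨a, ha, rfl⟩; simpa using ha
  · intro h; exact ⟨x - w, h, by simp⟩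

lemma aux_oneD {I : Set ℝ} (hI : Convex ℝ I) (hc : IsClosed I) (hb : BddBelow I) {t : ℝ}
    (ht : 0 ≤ t) : volume (I \ ((· + t) '' I)) ≤ ENNReal.ofReal t := by
  rcases I.eq_empty_or_nonempty with h | h
  · simp [h]
  · have ha : sInf I ∈ I := IsClosed.csInf_mem hc h hb
    have hsub : I \ ((· + t) '' I) ⊆ Set.Ico (sInf I) (sInf I + t) := by
      rintro x ⟨hxI, hx2⟩
      refine ⟨csInf_le hb hxI, ?_⟩
      by_contra hlt
      push_neg at hlt
      have hle : sInf I ≤ x := csInf_le hb hxI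
      have hxt : x - t ∈ I := hI.ordConnected.out ha hxI ⟨by linarith, by linarith⟩
      exact hx2 ⟨x - t, hxt, by ring⟩
    calc volume (I \ ((· + t) '' I)) ≤ volume (Set.Ico (sInf I) (sInf I + t)) :=
          measure_mono hsub
      _ = ENNReal.ofReal t := by rw [Real.volume_Ico, add_sub_cancel_left]

lemma aux_core {n : ℕ} (i₀ : Fin (n + 1)) {A : Set (Fin (n + 1) → ℝ)} (hA : IsCompact A)
    (hconv : Convex ℝ A) {t : ℝ} (ht : 0 ≤ t) :
    volume (A \ ((· + Pi.single i₀ t) '' A)) ≤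
      ENNReal.ofReal t * volume ((fun x (j : Fin n) => x (i₀.succAbove j)) '' A) := by
  classical
  set π : (Fin (n + 1) → ℝ) → (Fin n → ℝ) := fun x j => x (i₀.succAbove j) with hπdef
  have hπcont : Continuous π := continuous_pi fun j => continuous_apply _
  have hBc : IsCompact (π '' A) := hA.image hπcont
  have hBm : MeasurableSet (π '' A) := hBc.isClosed.measurableSet
  set v : Fin (n + 1) → ℝ := Pi.single i₀ t with hvdef
  have htr : IsCompact ((· + v) '' A) := hA.image (continuous_id.add continuous_const)
  set D := A \ ((· + v) '' A) with hDdef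
  have hDm : MeasurableSet D := hA.isClosed.measurableSet.diff htr.isClosed.measurableSet
  set ψ := MeasurableEquiv.piFinSuccAbove (fun _ : Fin (n + 1) => ℝ) i₀ with hψdef
  have hψp : MeasurePreserving ψ volume volume :=
    volume_preserving_piFinSuccAbove (fun _ : Fin (n + 1) => ℝ) i₀
  have hψDm : MeasurableSet (ψ '' D) := by
    rw [MeasurableEquiv.image_eq_preimage_symm]
    exact ψ.symm.measurable hDm
  have h1 : volume D = volume (ψ '' D) := by
    rw [MeasurableEquiv.image_eq_preimage_symm]
    exact ((hψp.symm ψ).measure_preimage hDm.nullMeasurableSet).symm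
  have hfiber : ∀ y : Fin n → ℝ, volume ((fun r : ℝ => (r, y)) ⁻¹' (ψ '' D)) ≤
      (π '' A).indicator (fun _ => ENNReal.ofReal t) y := by
    intro y
    set Fy : ℝ → (Fin (n + 1) → ℝ) := fun r => i₀.insertNth r y with hFydef
    have hFy_same : ∀ r, Fy r i₀ = r := by
      intro r; simp [hFydef]
    have hFy_above : ∀ r j, Fy r (i₀.succAbove j) = y j := by
      intro r j; simp [hFydef]
    have hψsymm : ∀ r : ℝ, ψ.symm (r, y) = Fy r := by
      intro r
      simp only [hψdef, hFydef, MeasurableEquiv.piFinSuccAbove_symm_apply]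
      rfl
    have hmem : ∀ r : ℝ, (r, y) ∈ ψ '' D ↔ Fy r ∈ D := by
      intro r
      rw [MeasurableEquiv.image_eq_preimage_symm, Set.mem_preimage, hψsymm]
    set I : Set ℝ := {r | Fy r ∈ A} with hIdef
    have hlineeq : ∀ r : ℝ, Fy r = AffineMap.lineMap (Fy 0) (Fy 1) r := by
      intro r; funext j
      rcases eq_or_ne j i₀ with rfl | hj
      · simp [AffineMap.lineMap_apply_module, hFy_same]
      · obtain ⟨k, rfl⟩ := Fin.exists_succAbove_eq hj
        simp [AffineMap.lineMap_apply_module, hFy_above]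
        ring
    have hIpre : I = (AffineMap.lineMap (Fy 0) (Fy 1) : ℝ →ᵃ[ℝ] (Fin (n + 1) → ℝ)) ⁻¹' A := by
      ext r; simp [hIdef, hlineeq r]
    have hIconv : Convex ℝ I := by
      rw [hIpre]; exact hconv.affine_preimage _
    have hIclosed : IsClosed I := by
      rw [hIpre]; exact hA.isClosed.preimage (AffineMap.lineMap_continuous)
    have hIbdd : BddBelow I := by
      obtain ⟨R, hR⟩ := hA.isBounded.subset_closedBall 0
      refine ⟨-R, fun r hr => ?_⟩
      have h1 : Fy r ∈ A := hr
      have h2 : ‖Fy r‖ ≤ R := by simpa [mem_closedBall_zero_iff] using hR h1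
      have h3 : ‖Fy r i₀‖ ≤ ‖Fy r‖ := norm_le_pi_norm (Fy r) i₀
      rw [hFy_same] at h3
      have := (abs_le.mp (h3.trans h2)).1
      linarith
    have hFyv : ∀ r : ℝ, Fy r - v = Fy (r - t) := by
      intro r; funext j
      rcases eq_or_ne j i₀ with rfl | hj
      · simp [hFy_same, hvdef]
      · obtain ⟨k, rfl⟩ := Fin.exists_succAbove_eq hj
        simp [hFy_above, hvdef, Pi.single_eq_of_ne (Fin.succAbove_ne i₀ k)]
    have hset : (fun r : ℝ => (r, y)) ⁻¹' (ψ '' D) = I \ ((· + t) '' I) := by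
      ext r
      simp only [Set.mem_preimage, hmem r]; simp only [hDdef, Set.mem_diff]
      rw [aux_mem_image_add, aux_mem_image_add, hFyv]
      exact Iff.rfl
    rw [hset]
    by_cases hy : y ∈ π '' A
    · rw [Set.indicator_of_mem hy]
      exact aux_oneD hIconv hIclosed hIbdd ht
    · rw [Set.indicator_of_notMem hy]
      have : I = ∅ := by
        rcases Set.eq_empty_or_nonempty I with h | ⟨r, hr⟩
        · exact h
        · exact absurd ⟨Fy r, hr, funext fun j => hFy_above r j⟩ hy
      rw [le_zero_iff]
      refine measure_mono_null (fun r hr => ?_) (measure_empty)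
      rw [this] at hr
      exact absurd hr.1 (Set.notMem_empty r)
  calc volume D = volume (ψ '' D) := h1
    _ = ∫⁻ y, volume ((fun r : ℝ => (r, y)) ⁻¹' (ψ '' D)) := by
        rw [Measure.volume_eq_prod, Measure.prod_apply_symm hψDm]
    _ ≤ ∫⁻ y, (π '' A).indicator (fun _ => ENNReal.ofReal t) y := lintegral_mono hfiber
    _ = ENNReal.ofReal t * volume (π '' A) := by
        rw [lintegral_indicator hBm, setLIntegral_const]


theorem stmt4 (d : ℕ) (hd : 1 ≤ d) (W : Set (EuclideanSpace ℝ (Fin d)))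
    (hWc : IsCompact W) (hWconv : Convex ℝ W)
    (u : EuclideanSpace ℝ (Fin d)) (hu : ‖u‖ = 1)
    (gW : EuclideanSpace ℝ (Fin d) → ℝ)
    (hgW : ∀ y, gW y = (volume (W ∩ ((· + y) '' W))).toReal)
    (V : ℝ)
    (hV : V = (μH[(d : ℝ) - 1]
        ((fun x => x - (inner ℝ x u : ℝ) • u) '' W)).toReal) :
    LipschitzOnWith (Real.toNNReal V) (fun r : ℝ => gW (r • u)) (Set.Ici 0) := by
  classical
  obtain ⟨n, rfl⟩ : ∃ n, d = n + 1 := ⟨d - 1, (Nat.succ_pred_eq_of_pos hd).symm⟩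
  have hV0 : 0 ≤ V := by rw [hV]; exact ENNReal.toReal_nonneg
  have hexp : ((n + 1 : ℕ) : ℝ) - 1 = (n : ℝ) := by push_cast; ring
  rw [hexp] at hV
  set SS := (fun x => x - (inner ℝ x u : ℝ) • u) '' W with hSSdef
  set i₀ : Fin (n + 1) := 0 with hi₀def
  -- orthonormal basis adapted to u
  have hcard : Module.finrank ℝ (EuclideanSpace ℝ (Fin (n + 1))) = Fintype.card (Fin (n + 1)) := by
    simp
  have horth : Orthonormal ℝ (({i₀} : Set (Fin (n + 1))).restrict (fun _ => u)) := by
    rw [orthonormal_iff_ite]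
    rintro ⟨i, rfl⟩ ⟨j, rfl⟩
    rw [if_pos rfl]
    show (inner ℝ u u : ℝ) = 1
    rw [real_inner_self_eq_norm_mul_norm, hu]; norm_num
  obtain ⟨b, hb⟩ := horth.exists_orthonormalBasis_extension_of_card_eq hcard
  have hbu : b i₀ = u := hb i₀ rfl
  set T := b.repr with hTdef
  set f : EuclideanSpace ℝ (Fin (n + 1)) → (Fin (n + 1) → ℝ) := fun x j => T x j with hfdef
  have hfadd : ∀ x y, f (x + y) = f x + f y := by
    intro x y; funext j; simp [hfdef, map_add]
  have hfsmul : ∀ (c : ℝ) (x), f (c • x) = c • f x := by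
    intro c x; funext j; simp [hfdef, _root_.map_smul]
  have hfinj : Function.Injective f := by
    intro x y h
    apply T.injective
    exact congrArg (WithLp.toLp 2) (funext fun j => congrFun h j)
  have hfcont : Continuous f :=
    (PiLp.lipschitzWith_ofLp 2 (fun _ : Fin (n + 1) => ℝ)).continuous.comp T.continuous
  -- volume transfer
  have hvolφ : MeasurePreserving ((MeasurableEquiv.toLp 2 (Fin (n + 1) → ℝ)).symm) volume volume :=
    EuclideanSpace.volume_preserving_symm_measurableEquiv_toLp _
  have hvolf : ∀ S : Set (EuclideanSpace ℝ (Fin (n + 1))), MeasurableSet S →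
      volume (f '' S) = volume S := by
    intro S hS
    have hTS : MeasurableSet (⇑T.symm ⁻¹' S) := hS.preimage T.symm.continuous.measurable
    have h2 : f '' S = ((MeasurableEquiv.toLp 2 (Fin (n + 1) → ℝ)).symm).symm ⁻¹' (⇑T.symm ⁻¹' S) := by
      ext x
      simp only [Set.mem_image, Set.mem_preimage]
      constructor
      · rintro ⟨w, hw, rfl⟩
        have h3 : T.symm (((MeasurableEquiv.toLp 2 (Fin (n + 1) → ℝ)).symm).symm (f w)) = w := by
          have : ((MeasurableEquiv.toLp 2 (Fin (n + 1) → ℝ)).symm).symm (f w) = T w := rfl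
          rw [this, LinearIsometryEquiv.symm_apply_apply]
        rwa [h3]
      · intro h
        refine ⟨T.symm (((MeasurableEquiv.toLp 2 (Fin (n + 1) → ℝ)).symm).symm x), h, ?_⟩
        funext j
        show T (T.symm (((MeasurableEquiv.toLp 2 (Fin (n + 1) → ℝ)).symm).symm x)) j = x j
        rw [LinearIsometryEquiv.apply_symm_apply]
        rfl
    rw [h2, (hvolφ.symm _).measure_preimage hTS.nullMeasurableSet,
      b.measurePreserving_repr_symm.measure_preimage hS.nullMeasurableSet]
  have htransim : ∀ (w : EuclideanSpace ℝ (Fin (n + 1))) (S : Set (EuclideanSpace ℝ (Fin (n + 1)))),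
      f '' ((· + w) '' S) = (· + f w) '' (f '' S) := by
    intro w S
    rw [Set.image_image, Set.image_image]
    exact Set.image_congr fun x _ => hfadd x w
  have hWm : MeasurableSet W := hWc.isClosed.measurableSet
  have hWtr : ∀ w : EuclideanSpace ℝ (Fin (n + 1)), IsCompact ((· + w) '' W) := fun w =>
    hWc.image (continuous_id.add continuous_const)
  have hWtrm : ∀ w : EuclideanSpace ℝ (Fin (n + 1)), MeasurableSet ((· + w) '' W) := fun w =>
    (hWtr w).isClosed.measurableSet
  set m : EuclideanSpace ℝ (Fin (n + 1)) → ℝ≥0∞ := fun y => volume (W ∩ ((· + y) '' W))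
    with hmdef
  have hmfin : ∀ y, m y ≠ ⊤ := fun y =>
    ((measure_mono Set.inter_subset_left).trans_lt hWc.measure_lt_top).ne
  have hinv : ∀ (w : EuclideanSpace ℝ (Fin (n + 1))) (S : Set (EuclideanSpace ℝ (Fin (n + 1)))),
      volume ((· + w) '' S) = volume S := by
    intro w S
    have h : (· + w) '' S = (fun x => -w + x) ⁻¹' S := by
      ext x
      rw [aux_mem_image_add, Set.mem_preimage, sub_eq_neg_add]
    rw [h, measure_preimage_add]
  -- A-side objects
  set A := f '' W with hAdef
  have hAc : IsCompact A := hWc.image hfcont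
  have hAconv : Convex ℝ A := hWconv.is_linear_image ⟨hfadd, hfsmul⟩
  set π : (Fin (n + 1) → ℝ) → (Fin n → ℝ) := fun x j => x (i₀.succAbove j) with hπdef
  have hπcont : Continuous π := continuous_pi fun j => continuous_apply _
  set B := π '' A with hBdef
  have hBc : IsCompact B := hAc.image hπcont
  set ext : (Fin n → ℝ) → (Fin (n + 1) → ℝ) := fun y => i₀.insertNth 0 y with hextdef
  have hπL : LipschitzWith 1 π := LipschitzWith.of_edist_le fun x y =>
    Finset.sup_le fun j _ => edist_le_pi_edist x y (i₀.succAbove j)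
  have hextL : LipschitzWith 1 ext := LipschitzWith.of_edist_le fun a c => by
    refine Finset.sup_le fun j _ => ?_
    rcases eq_or_ne j i₀ with rfl | hj
    · simp [hextdef, Fin.insertNth_apply_same]
    · obtain ⟨k, rfl⟩ := Fin.exists_succAbove_eq hj
      simpa [hextdef, Fin.insertNth_apply_succAbove] using edist_le_pi_edist a c k
  have hπext : ∀ yy, π (ext yy) = yy := by
    intro yy; funext j; simp [hπdef, hextdef]
  have hn0 : (0 : ℝ) ≤ (n : ℝ) := Nat.cast_nonneg n
  have hTu : T u = EuclideanSpace.single i₀ (1 : ℝ) := by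
    rw [← hbu]; exact b.repr_self i₀
  have hinner : ∀ x : EuclideanSpace ℝ (Fin (n + 1)), (inner ℝ x u : ℝ) = T x i₀ := by
    intro x
    rw [← LinearIsometryEquiv.inner_map_map T x u, hTu, EuclideanSpace.inner_single_right]
    simp
  have hproj : ∀ x : EuclideanSpace ℝ (Fin (n + 1)),
      f (x - (inner ℝ x u : ℝ) • u) = ext (π (f x)) := by
    intro x
    funext j
    have hL : f (x - (inner ℝ x u : ℝ) • u) j = T x j - T x i₀ * T u j := by
      simp [hfdef, map_sub, _root_.map_smul, hinner x]
    rcases eq_or_ne j i₀ with rfl | hj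
    · rw [hL, hTu]
      simp [hextdef, Fin.insertNth_apply_same, EuclideanSpace.single_apply]
    · obtain ⟨k, rfl⟩ := Fin.exists_succAbove_eq hj
      rw [hL, hTu]
      simp [hextdef, hπdef, hfdef, Fin.insertNth_apply_succAbove,
        EuclideanSpace.single_apply, (Fin.succAbove_ne i₀ k)]
  have hS0 : f '' SS = ext '' B := by
    rw [hSSdef, hBdef, hAdef, Set.image_image, Set.image_image, Set.image_image]
    exact Set.image_congr fun x _ => hproj x
  -- Hausdorff measure chain
  have e1 : volume B = μH[(n : ℝ)] B := by
    have h := hausdorffMeasure_pi_real (ι := Fin n)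
    rw [Fintype.card_fin] at h
    rw [← h]
  have e2 : μH[(n : ℝ)] B ≤ μH[(n : ℝ)] (ext '' B) := by
    have h := hπL.hausdorffMeasure_image_le hn0 (ext '' B)
    rw [Set.image_image] at h
    simp only [hπext] at h
    simpa [Set.image_id'] using h
  have e4 : μH[(n : ℝ)] (f '' SS) ≤ μH[(n : ℝ)] (⇑T '' SS) := by
    have h := (PiLp.lipschitzWith_ofLp 2 (fun _ : Fin (n + 1) => ℝ)).hausdorffMeasure_image_le
      hn0 (⇑T '' SS)
    simp only [ENNReal.coe_one, ENNReal.one_rpow, one_mul] at h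
    refine le_trans (le_of_eq ?_) h
    congr 1
    simp only [Set.image_image]
    rfl
  have e5 : μH[(n : ℝ)] (⇑T '' SS) = μH[(n : ℝ)] SS :=
    T.isometry.hausdorffMeasure_image (Or.inl hn0) _
  have hrevaux : μH[(n : ℝ)] (ext '' B) ≤ μH[(n : ℝ)] B := by
    have h := hextL.hausdorffMeasure_image_le hn0 B
    simpa using h
  have hfin : μH[(n : ℝ)] SS ≠ ⊤ := by
    obtain ⟨C, hC⟩ : ∃ C : ℝ≥0, LipschitzWith C ⇑(WithLp.equiv 2 (Fin (n + 1) → ℝ)).symm := by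
      refine ⟨_, (PiLp.antilipschitzWith_ofLp 2 (fun _ : Fin (n + 1) => ℝ)).to_rightInverse ?_⟩
      exact fun x => (WithLp.equiv 2 (Fin (n + 1) → ℝ)).apply_symm_apply x
    have h6 : ⇑T '' SS = ⇑(WithLp.equiv 2 (Fin (n + 1) → ℝ)).symm '' (f '' SS) := by
      simp only [Set.image_image]
      rfl
    have hchain : μH[(n : ℝ)] SS ≤ (C : ℝ≥0∞) ^ (n : ℝ) * volume B := by
      calc μH[(n : ℝ)] SS = μH[(n : ℝ)] (⇑T '' SS) := e5.symm
        _ = μH[(n : ℝ)] (⇑(WithLp.equiv 2 (Fin (n + 1) → ℝ)).symm '' (f '' SS)) :=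
            congrArg (fun s => μH[(n : ℝ)] s) h6
        _ ≤ (C : ℝ≥0∞) ^ (n : ℝ) * μH[(n : ℝ)] (f '' SS) :=
            hC.hausdorffMeasure_image_le hn0 _
        _ = (C : ℝ≥0∞) ^ (n : ℝ) * μH[(n : ℝ)] (ext '' B) := by rw [hS0]
        _ ≤ (C : ℝ≥0∞) ^ (n : ℝ) * μH[(n : ℝ)] B := mul_le_mul_right hrevaux _
        _ = (C : ℝ≥0∞) ^ (n : ℝ) * volume B := by rw [e1]
    refine ne_top_of_le_ne_top ?_ hchain
    exact (ENNReal.mul_lt_top (ENNReal.rpow_lt_top_of_nonneg hn0 ENNReal.coe_ne_top)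
      hBc.measure_lt_top).ne
  have hB : volume B ≤ ENNReal.ofReal V := by
    have hofV : ENNReal.ofReal V = μH[(n : ℝ)] SS := by
      rw [hV]; exact ENNReal.ofReal_toReal hfin
    rw [hofV]
    calc volume B = μH[(n : ℝ)] B := e1
      _ ≤ μH[(n : ℝ)] (ext '' B) := e2
      _ = μH[(n : ℝ)] (f '' SS) := by rw [hS0]
      _ ≤ μH[(n : ℝ)] (⇑T '' SS) := e4
      _ = μH[(n : ℝ)] SS := e5
  -- key one-sided volume bound
  have hkey : ∀ t : ℝ, 0 ≤ t →
      volume (W \ ((· + t • u) '' W)) ≤ ENNReal.ofReal (V * t) := by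
    intro t ht
    have hfu : f (t • u) = Pi.single i₀ t := by
      funext j
      have h1 : f (t • u) j = t * T u j := by
        simp [hfdef, _root_.map_smul]
      rw [h1, hTu]
      rcases eq_or_ne j i₀ with rfl | hj
      · simp [EuclideanSpace.single_apply]
      · simp [EuclideanSpace.single_apply, hj, Pi.single_eq_of_ne hj]
    have hdm : MeasurableSet (W \ ((· + t • u) '' W)) := hWm.diff (hWtrm _)
    have h1 : volume (W \ ((· + t • u) '' W)) = volume (A \ ((· + Pi.single i₀ t) '' A)) := by
      rw [← hvolf _ hdm, Set.image_diff hfinj, htransim, hfu]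
    rw [h1]
    refine le_trans (aux_core i₀ hAc hAconv ht) ?_
    calc ENNReal.ofReal t * volume B ≤ ENNReal.ofReal t * ENNReal.ofReal V :=
          mul_le_mul_right hB _
      _ = ENNReal.ofReal (V * t) := by rw [← ENNReal.ofReal_mul ht, mul_comm]
  -- covariogram manipulation
  have hF2 : ∀ y z : EuclideanSpace ℝ (Fin (n + 1)),
      m z ≤ m y + volume (((· + z) '' W) \ ((· + y) '' W)) := by
    intro y z
    refine le_trans (measure_mono ?_) (measure_union_le _ _)
    rintro x ⟨hxW, hxz⟩
    by_cases hxy : x ∈ (· + y) '' W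
    · exact Or.inl ⟨hxW, hxy⟩
    · exact Or.inr ⟨hxz, hxy⟩
  have hF3 : ∀ y z : EuclideanSpace ℝ (Fin (n + 1)),
      volume (((· + z) '' W) \ ((· + y) '' W)) = volume (W \ ((· + (y - z)) '' W)) := by
    intro y z
    have hset : ((· + z) '' W) \ ((· + y) '' W) = (· + z) '' (W \ ((· + (y - z)) '' W)) := by
      ext x
      have hxx : x - z - (y - z) = x - y := by abel
      simp only [Set.mem_diff, aux_mem_image_add, hxx]
    rw [hset, hinv]
  have hmneg : ∀ w : EuclideanSpace ℝ (Fin (n + 1)), m (-w) = m w := by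
    intro w
    have hset : W ∩ ((· + (-w)) '' W) = (· + (-w)) '' (((· + w) '' W) ∩ W) := by
      ext x
      simp only [Set.mem_inter_iff, aux_mem_image_add, sub_neg_eq_add, add_sub_cancel_right]
    show volume (W ∩ ((· + (-w)) '' W)) = volume (W ∩ ((· + w) '' W))
    rw [hset, hinv, Set.inter_comm]
  have hdiffvol : ∀ w : EuclideanSpace ℝ (Fin (n + 1)),
      volume (W \ ((· + w) '' W)) = volume W - m w := by
    intro w
    have h : W \ ((· + w) '' W) = W \ (W ∩ ((· + w) '' W)) := by
      ext x; simp only [Set.mem_diff, Set.mem_inter_iff]; tauto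
    rw [h, measure_diff Set.inter_subset_left (hWm.inter (hWtrm w)).nullMeasurableSet (hmfin w)]
  have hdiffle : ∀ t : ℝ, 0 ≤ t →
      volume (W \ ((· + (-(t • u))) '' W)) ≤ ENNReal.ofReal (V * t) := by
    intro t ht
    rw [hdiffvol, hmneg, ← hdiffvol]
    exact hkey t ht
  -- assemble the Lipschitz estimate
  have hmain : ∀ p q : ℝ, p ≤ q → |gW (q • u) - gW (p • u)| ≤ V * (q - p) := by
    intro p q hpq
    have ht : (0:ℝ) ≤ q - p := by linarith
    have hVt : 0 ≤ V * (q - p) := mul_nonneg hV0 ht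
    have hub1 : m (q • u) ≤ m (p • u) + ENNReal.ofReal (V * (q - p)) := by
      refine le_trans (hF2 (p • u) (q • u)) (add_le_add_right ?_ _)
      rw [hF3, show p • u - q • u = -((q - p) • u) from by rw [sub_smul]; abel]
      exact hdiffle (q - p) ht
    have hub2 : m (p • u) ≤ m (q • u) + ENNReal.ofReal (V * (q - p)) := by
      refine le_trans (hF2 (q • u) (p • u)) (add_le_add_right ?_ _)
      rw [hF3, show q • u - p • u = (q - p) • u from (sub_smul q p u).symm]
      exact hkey (q - p) ht
    have hto : ∀ y z : EuclideanSpace ℝ (Fin (n + 1)),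
        m y ≤ m z + ENNReal.ofReal (V * (q - p)) →
        (m y).toReal ≤ (m z).toReal + V * (q - p) := by
      intro y z h
      have hne : m z + ENNReal.ofReal (V * (q - p)) ≠ ⊤ :=
        ENNReal.add_ne_top.mpr ⟨hmfin z, ENNReal.ofReal_ne_top⟩
      have := ENNReal.toReal_mono hne h
      rwa [ENNReal.toReal_add (hmfin z) ENNReal.ofReal_ne_top,
        ENNReal.toReal_ofReal hVt] at this
    rw [hgW, hgW, abs_sub_le_iff]
    exact ⟨by have := hto _ _ hub1; linarith, by have := hto _ _ hub2; linarith⟩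
  have hVnn : ((Real.toNNReal V : ℝ≥0) : ℝ) = V := Real.coe_toNNReal V hV0
  refine LipschitzOnWith.of_dist_le_mul fun r _ s _ => ?_
  rw [hVnn, Real.dist_eq, Real.dist_eq]
  rcases le_total r s with h | h
  · have h1 := hmain r s h
    rw [abs_sub_comm]
    calc |gW (s • u) - gW (r • u)| ≤ V * (s - r) := h1
      _ = V * |r - s| := by rw [abs_sub_comm, abs_of_nonneg (by linarith : (0:ℝ) ≤ s - r)]
  · have h1 := hmain s r h
    calc |gW (r • u) - gW (s • u)| ≤ V * (r - s) := h1
      _ = V * |r - s| := by rw [abs_of_nonneg (by linarith : (0:ℝ) ≤ r - s)]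
end

section
/- For any (a₁,...,a_m) ≠ 0 and distinct exponents α₁, ..., α_m > -d/2, the function u ↦ Σ_{i,j=1}^m a_i a_j u^{α_i+α_j+d}/(α_i+α_j+d) is strictly positive for all sufficiently small u > 0. -/
open Filter Set

theorem stmt12 (d : ℕ) (hd : 1 ≤ d) (m : ℕ) (α : Fin m → ℝ)
    (hα : ∀ i, -(d : ℝ) / 2 < α i) (hinj : Function.Injective α)
    (a : Fin m → ℝ) (ha : a ≠ 0) :
    ∃ ε > 0, ∀ u : ℝ, 0 < u → u < ε →
      0 < ∑ i, ∑ j, a i * a j * u ^ (α i + α j + d) / (α i + α j + d) := by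
  have hane : ∃ i, a i ≠ 0 := by
    by_contra h
    push_neg at h
    exact ha (funext fun i => h i)
  obtain ⟨i₁, hi₁⟩ := hane
  have hs : (Finset.univ.filter (fun i => a i ≠ 0)).Nonempty := ⟨i₁, by simp [hi₁]⟩
  obtain ⟨i₀, hi₀mem, hi₀min⟩ := Finset.exists_min_image _ α hs
  have ha₀ : a i₀ ≠ 0 := (Finset.mem_filter.mp hi₀mem).2
  have hmin : ∀ i, a i ≠ 0 → α i₀ ≤ α i := fun i hi =>
    hi₀min i (Finset.mem_filter.mpr ⟨Finset.mem_univ i, hi⟩)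
  set β : ℝ := 2 * α i₀ + d with hβ
  have hβpos : 0 < β := by have := hα i₀; unfold β; nlinarith
  have hγpos : ∀ i j : Fin m, 0 < α i + α j + d := by
    intro i j; have h1 := hα i; have h2 := hα j; linarith
  set c : ℝ := a i₀ ^ 2 / β with hc
  have ha₀sq : 0 < a i₀ ^ 2 := by positivity
  have hcpos : 0 < c := div_pos ha₀sq hβpos
  -- the rescaled function tends to c
  have hT : Tendsto (fun u : ℝ => ∑ i, ∑ j,
      a i * a j * u ^ (α i + α j + d - β) / (α i + α j + d))
      (nhdsWithin 0 (Ioi 0)) (nhds c) := by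
    have hcsum : c = ∑ i : Fin m, ∑ j : Fin m,
        (if i = i₀ then (if j = i₀ then c else 0) else 0) := by
      simp
    rw [hcsum]
    apply tendsto_finset_sum
    intro i _
    apply tendsto_finset_sum
    intro j _
    by_cases hij : i = i₀ ∧ j = i₀
    · obtain ⟨hi, hj⟩ := hij
      have hexp : α i + α j + (d : ℝ) - β = 0 := by rw [hi, hj, hβ]; ring
      simp only [hexp, Real.rpow_zero, if_pos hi, if_pos hj]
      have heq : a i * a j * 1 / (α i + α j + d) = c := by
        rw [hi, hj, hc, hβ, sq]
        ring_nf
      rw [heq]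
      exact tendsto_const_nhds
    · have hL : (if i = i₀ then (if j = i₀ then c else 0) else 0) = 0 := by
        by_cases h1 : i = i₀
        · by_cases h2 : j = i₀
          · exact absurd ⟨h1, h2⟩ hij
          · simp [h1, h2]
        · simp [h1]
      rw [hL]
      by_cases hai : a i = 0
      · simp [hai]
      by_cases haj : a j = 0
      · simp [haj]
      -- exponent is positive
      have h1 : α i₀ ≤ α i := hmin i hai
      have h2 : α i₀ ≤ α j := hmin j haj
      have hne : α i₀ < α i ∨ α i₀ < α j := by
        by_contra h
        push_neg at h
        have hi : α i = α i₀ := le_antisymm h.1 h1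
        have hj : α j = α i₀ := le_antisymm h.2 h2
        exact hij ⟨hinj hi, hinj hj⟩
      have hp : 0 < α i + α j + d - β := by
        unfold β; rcases hne with h | h <;> linarith
      have hpow : Tendsto (fun u : ℝ => u ^ (α i + α j + d - β))
          (nhdsWithin 0 (Ioi 0)) (nhds 0) := by
        have hca := (Real.continuousAt_rpow_const 0 (α i + α j + d - β) (Or.inr hp.le))
        have := hca.continuousWithinAt (s := Ioi 0)
        have h0 : (0 : ℝ) ^ (α i + α j + d - β) = 0 := Real.zero_rpow hp.ne'
        rw [ContinuousWithinAt, h0] at this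
        exact this
      have : Tendsto (fun u : ℝ => a i * a j * u ^ (α i + α j + d - β) / (α i + α j + d))
          (nhdsWithin 0 (Ioi 0)) (nhds (a i * a j * 0 / (α i + α j + d))) := by
        exact (hpow.const_mul (a i * a j)).div_const _
      simpa using this
  -- eventually positive
  have hev : ∀ᶠ u in nhdsWithin (0 : ℝ) (Ioi 0),
      0 < ∑ i, ∑ j, a i * a j * u ^ (α i + α j + d - β) / (α i + α j + d) :=
    hT.eventually (eventually_gt_nhds hcpos)
  obtain ⟨ε, hε, hsub⟩ := mem_nhdsGT_iff_exists_Ioo_subset.mp hev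
  refine ⟨ε, hε, fun u hu huε => ?_⟩
  have hTu : 0 < ∑ i, ∑ j, a i * a j * u ^ (α i + α j + d - β) / (α i + α j + d) :=
    hsub ⟨hu, huε⟩
  have hfac : ∑ i, ∑ j, a i * a j * u ^ (α i + α j + (d : ℝ)) / (α i + α j + d)
      = u ^ β * ∑ i, ∑ j, a i * a j * u ^ (α i + α j + d - β) / (α i + α j + d) := by
    rw [Finset.mul_sum]
    apply Finset.sum_congr rfl
    intro i _
    rw [Finset.mul_sum]
    apply Finset.sum_congr rfl
    intro j _
    have : α i + α j + (d : ℝ) = β + (α i + α j + d - β) := by ring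
    rw [this, Real.rpow_add hu]
    ring
  rw [hfac]
  exact mul_pos (Real.rpow_pos_of_pos hu β) hTu
end
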